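/- If Z ⊆ A⁺ is a regular language and a strong alt-induced code, then the set of pairs (X, Y) of strong alternative codes with XY = Z is finite. -/

import Mathlib

open List

/-- The (catenation) product `XY` of two languages. -/
def ProdL {A : Type*} (X Y : Set (List A)) : Set (List A) :=
  {z | ∃ x ∈ X, ∃ y ∈ Y, z = x ++ y}

/-- The product `XY` is unambiguous. -/
def Unamb {A : Type*} (X Y : Set (List A)) : Prop :=
  ∀ x₁ ∈ X, ∀ y₁ ∈ Y, ∀ x₂ ∈ X, ∀ y₂ ∈ Y,
    x₁ ++ y₁ = x₂ ++ y₂ → x₁ = x₂ ∧ y₁ = y₂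

/-- `X ⊆ A⁺` is a code: any equality of two (nonempty) factorizations over `X`
forces the factorizations to coincide. -/
def IsCode {A : Type*} (X : Set (List A)) : Prop :=
  ([] : List A) ∉ X ∧
  ∀ xs ys : List (List A), xs ≠ [] → ys ≠ [] →
    (∀ w ∈ xs, w ∈ X) → (∀ w ∈ ys, w ∈ X) → xs.flatten = ys.flatten → xs = ys

/-- `us` is an alternative factorization on `(X, Y)`: it has length at least 2,
its words lie in `X ∪ Y`, and consecutive words alternate between `X` and `Y`. -/
def IsAltFact {A : Type*} (X Y : Set (List A)) (us : List (List A)) : Prop :=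
  2 ≤ us.length ∧ (∀ w ∈ us, w ∈ X ∪ Y) ∧
  us.Chain' (fun u v => (u ∈ X → v ∈ Y) ∧ (u ∈ Y → v ∈ X))

/-- Two alternative factorizations are similar: they begin with words in the same
set (`X` or `Y`) and they end with words in the same set. -/
def SimilarFact {A : Type*} (X Y : Set (List A)) (us vs : List (List A)) : Prop :=
  (∀ u ∈ us.head?, ∀ v ∈ vs.head?, (u ∈ X ∧ v ∈ X) ∨ (u ∈ Y ∧ v ∈ Y)) ∧
  (∀ u ∈ us.getLast?, ∀ v ∈ vs.getLast?, (u ∈ X ∧ v ∈ X) ∨ (u ∈ Y ∧ v ∈ Y))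

/-- `(X, Y)` is an alternative code: `X, Y` are nonempty subsets of `A⁺` and no
word admits two different similar alternative factorizations on `(X, Y)`. -/
def IsAltCode {A : Type*} (X Y : Set (List A)) : Prop :=
  X.Nonempty ∧ Y.Nonempty ∧ ([] : List A) ∉ X ∧ ([] : List A) ∉ Y ∧
  ∀ us vs : List (List A), IsAltFact X Y us → IsAltFact X Y vs →
    SimilarFact X Y us vs → us.flatten = vs.flatten → us = vs

/-- `Z` is an alt-induced code: `Z = XY` for some alternative code `(X, Y)`. -/
def IsAltInduced {A : Type*} (Z : Set (List A)) : Prop :=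
  ∃ X Y : Set (List A), IsAltCode X Y ∧ Z = ProdL X Y

/-- `X ⊆ A⁺` is a prefix code: no word of `X` is a proper prefix of another word of `X`. -/
def IsPrefixCode {A : Type*} (X : Set (List A)) : Prop :=
  ([] : List A) ∉ X ∧ ∀ u ∈ X, ∀ v ∈ X, u <+: v → u = v

/-- `X ⊆ A⁺` is a suffix code: no word of `X` is a proper suffix of another word of `X`. -/
def IsSuffixCode {A : Type*} (X : Set (List A)) : Prop :=
  ([] : List A) ∉ X ∧ ∀ u ∈ X, ∀ v ∈ X, u <:+ v → u = v

/-- A bifix code is both a prefix code and a suffix code. -/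
def IsBifixCode {A : Type*} (X : Set (List A)) : Prop :=
  IsPrefixCode X ∧ IsSuffixCode X

/-- A maximal prefix code: a prefix code not properly contained in another prefix code. -/
def IsMaximalPrefixCode {A : Type*} (X : Set (List A)) : Prop :=
  IsPrefixCode X ∧ ∀ X' : Set (List A), IsPrefixCode X' → X ⊆ X' → X = X'

/-- A maximal suffix code: a suffix code not properly contained in another suffix code. -/
def IsMaximalSuffixCode {A : Type*} (X : Set (List A)) : Prop :=
  IsSuffixCode X ∧ ∀ X' : Set (List A), IsSuffixCode X' → X ⊆ X' → X = X'

/-- A maximal bifix code: a bifix code not properly contained in another bifix code. -/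
def IsMaximalBifixCode {A : Type*} (X : Set (List A)) : Prop :=
  IsBifixCode X ∧ ∀ X' : Set (List A), IsBifixCode X' → X ⊆ X' → X = X'

/-- `X` is thin: some word `w` is not a factor (infix) of any word of `X`. -/
def IsThin {A : Type*} (X : Set (List A)) : Prop :=
  ∃ w : List A, ∀ u v : List A, u ++ w ++ v ∉ X

/-- The left quotient `X⁻¹Y = {u | ∃ x ∈ X, xu ∈ Y}`. -/
def lQuot {A : Type*} (X Y : Set (List A)) : Set (List A) :=
  {u | ∃ x ∈ X, x ++ u ∈ Y}

/-- The right quotient `XY⁻¹ = {u | ∃ y ∈ Y, uy ∈ X}`. -/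
def rQuot {A : Type*} (X Y : Set (List A)) : Set (List A) :=
  {u | ∃ y ∈ Y, u ++ y ∈ X}

/-- `(X, Y)` is a strong alternative code: an alternative code with
`X⁻¹(XY) ⊆ Y` and `(XY)Y⁻¹ ⊆ X`. -/
def IsStrongAltCode {A : Type*} (X Y : Set (List A)) : Prop :=
  IsAltCode X Y ∧ lQuot X (ProdL X Y) ⊆ Y ∧ rQuot (ProdL X Y) Y ⊆ X

/-- `Z` is a strong alt-induced code: `Z = XY` for some strong alternative code `(X, Y)`. -/
def IsStrongAltInduced {A : Type*} (Z : Set (List A)) : Prop :=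
  ∃ X Y : Set (List A), IsStrongAltCode X Y ∧ Z = ProdL X Y

/-- `Z_a`: the set of words of `Z` beginning with the letter `a`. -/
def Za {A : Type*} (a : A) (Z : Set (List A)) : Set (List A) :=
  {w ∈ Z | w.head? = some a}

/-- A finite code `Z` is of standard form: all its words have length at least 2,
not all of its words begin with the same letter, and not all of its words end
with the same letter. -/
def StandardForm {A : Type*} (Z : Set (List A)) : Prop :=
  (∀ w ∈ Z, 2 ≤ w.length) ∧
  ¬ (∃ a : A, ∀ w ∈ Z, w.head? = some a) ∧
  ¬ (∃ a : A, ∀ w ∈ Z, w.getLast? = some a)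

/-- If `Z ⊆ A⁺` is a regular strong alt-induced code, then there are only
finitely many strong alternative codes `(X, Y)` inducing `Z`. -/
theorem stmt16 {A : Type*} [Fintype A] [Nonempty A]
    (Z : Set (List A)) (hZe : ([] : List A) ∉ Z)
    (hreg : Language.IsRegular (Z : Language A))
    (hZ : IsStrongAltInduced Z) :
    {p : Set (List A) × Set (List A) |
      IsStrongAltCode p.1 p.2 ∧ Z = ProdL p.1 p.2}.Finite := by
  obtain ⟨σ, fσ, M, hM⟩ := hreg
  haveI := fσ
  have hmem : ∀ w : List A, w ∈ Z ↔ M.eval w ∈ M.accept := by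
    intro w
    rw [← DFA.mem_accepts, hM]
    exact Iff.rfl
  set F : Set σ → (Set (List A) × Set (List A)) :=
    fun T => (({u | M.eval u ∈ T} : Set (List A)),
      lQuot ({u | M.eval u ∈ T} : Set (List A)) Z) with hF
  apply Set.Finite.subset (Set.finite_range F)
  rintro ⟨X, Y⟩ ⟨⟨hac, hXY1, hXY2⟩, hZ'⟩
  obtain ⟨hXne, hYne, hXe, hYe, halt⟩ := hac
  have hX : X = rQuot Z Y := by
    apply Set.Subset.antisymm
    · intro x hx
      obtain ⟨y, hy⟩ := hYne
      exact ⟨y, hy, by rw [hZ']; exact ⟨x, hx, y, hy, rfl⟩⟩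
    · rw [hZ']; exact hXY2
  have hY : Y = lQuot X Z := by
    apply Set.Subset.antisymm
    · intro y hy
      obtain ⟨x, hx⟩ := hXne
      exact ⟨x, hx, by rw [hZ']; exact ⟨x, hx, y, hy, rfl⟩⟩
    · rw [hZ']; exact hXY1
  refine ⟨{q | ∃ y ∈ Y, M.evalFrom q y ∈ M.accept}, ?_⟩
  have hXeq : ({u | M.eval u ∈ {q | ∃ y ∈ Y, M.evalFrom q y ∈ M.accept}} : Set (List A)) = X := by
    rw [hX]
    ext u
    simp only [Set.mem_setOf_eq, rQuot]
    constructor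
    · rintro ⟨y, hy, h⟩
      refine ⟨y, hy, (hmem _).2 ?_⟩
      rwa [DFA.eval, DFA.evalFrom_of_append]
    · rintro ⟨y, hy, h⟩
      refine ⟨y, hy, ?_⟩
      have := (hmem _).1 h
      rwa [DFA.eval, DFA.evalFrom_of_append] at this
  simp only [hF]
  rw [Prod.ext_iff]
  exact ⟨hXeq, by rw [hXeq, ← hY]⟩
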